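/- For the star graph K_{1,n−1} on n vertices with hub vertex 1, adjacency matrix A_n, and cos θ_{pq}(K_{1,n−1}) = (e^{A_n})_{pq}/√((e^{A_n})_{pp}(e^{A_n})_{qq}), the cosine of the communicability angle between any two distinct vertices tends to 1 as n → ∞: for the hub–leaf pairs, lim_{n→∞} cos θ_{1q}(K_{1,n−1}) = 1, and for pairs of distinct leaves, lim_{n→∞} cos θ_{pq}(K_{1,n−1}) = 1. Hence the communicability angle attains its lower bound 0° in the limit. -/

import Mathlib

open Matrix Filter Topology

/-- The adjacency matrix of the star graph `K_{1,n−1}` on vertex set `{1, …, n}` (vertex `p`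
is represented by the index `p - 1 : Fin n`): the hub, vertex `1` (index `0`), is adjacent
to every other vertex and there are no other edges. -/
def starAdj (n : ℕ) : Matrix (Fin n) (Fin n) ℝ :=
  Matrix.of fun p q => if (p.1 = 0 ∧ q.1 ≠ 0) ∨ (q.1 = 0 ∧ p.1 ≠ 0) then 1 else 0

/-- The cosine of the communicability angle of the star graph `K_{1,n−1}`:
`cos θ_{pq} = G_{pq}/√(G_{pp} G_{qq})` with `G = e^A`. -/
noncomputable def starCos (n : ℕ) (p q : Fin n) : ℝ :=
  NormedSpace.exp (starAdj n) p q
    / Real.sqrt (NormedSpace.exp (starAdj n) p p * NormedSpace.exp (starAdj n) q q)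

namespace StarAux

open scoped Nat

/-- `D m = ∑ m^k/(2k+2)! = (cosh √m − 1)/m`. -/
noncomputable def D (m : ℕ) : ℝ := ∑' k : ℕ, (m:ℝ)^k / ((2*k+2)! : ℝ)

/-- `S m = ∑ m^k/(2k+1)! = sinh √m/√m`. -/
noncomputable def S (m : ℕ) : ℝ := ∑' k : ℕ, (m:ℝ)^k / ((2*k+1)! : ℝ)

lemma summable_aux (m c : ℕ) (hc : 1 ≤ c) :
    Summable (fun k : ℕ => (m:ℝ)^k / ((2*k+c)! : ℝ)) := by
  refine Summable.of_nonneg_of_le (fun k => by positivity) (fun k => ?_)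
    (Real.summable_pow_div_factorial m)
  gcongr
  all_goals first | omega | positivity

lemma hasSum_D (m : ℕ) : HasSum (fun k : ℕ => (m:ℝ)^k / ((2*k+2)! : ℝ)) (D m) :=
  (summable_aux m 2 (by omega)).hasSum

lemma hasSum_S (m : ℕ) : HasSum (fun k : ℕ => (m:ℝ)^k / ((2*k+1)! : ℝ)) (S m) :=
  (summable_aux m 1 (by omega)).hasSum

lemma S_nonneg (m : ℕ) : 0 ≤ S m := tsum_nonneg fun k => by positivity

lemma D_pos (m : ℕ) : 0 < D m := by
  have h := le_hasSum (hasSum_D m) 0 (fun i _ => by positivity)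
  norm_num at h
  linarith

lemma D_ge (m : ℕ) : (m:ℝ)/24 ≤ D m := by
  have h := le_hasSum (hasSum_D m) 1 (fun i _ => by positivity)
  norm_num [Nat.factorial] at h
  linarith

/-- The fundamental identity `S² = D(mD + 2)`, i.e. `sinh² = cosh² − 1`. -/
lemma key_identities (m : ℕ) (hm : 0 < m) :
    S m ^ 2 = D m * ((m:ℝ) * D m + 2) := by
  set s : ℝ := Real.sqrt m with hs
  have hm' : (0:ℝ) < m := by exact_mod_cast hm
  have hs2 : s ^ 2 = m := Real.sq_sqrt hm'.le
  have hsinh : Real.sinh s = S m * s := by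
    refine HasSum.unique (Real.hasSum_sinh s) ?_
    have := (hasSum_S m).mul_right s
    convert this using 2 with k
    · rfl
    rw [pow_succ, pow_mul, hs2]
    ring
  have hcosh : Real.cosh s = (m:ℝ) * D m + 1 := by
    have h1 : HasSum (fun k : ℕ => s ^ (2*(k+1)) / ((2*(k+1))! : ℝ)) (Real.cosh s - 1) := by
      apply (hasSum_nat_add_iff (f := fun k : ℕ => s ^ (2*k) / ((2*k)! : ℝ)) 1).mpr
      convert Real.hasSum_cosh s using 1
      · rfl
      norm_num
    have h2 := (hasSum_D m).mul_right (m:ℝ)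
    have h3 : HasSum (fun k : ℕ => (m:ℝ)^k / ((2*k+2)! : ℝ) * m) (Real.cosh s - 1) := by
      convert h1 using 2 with k
      rw [pow_mul, hs2]
      ring_nf
    have := h2.unique h3
    linarith
  have hkey : Real.cosh s ^ 2 - Real.sinh s ^ 2 = 1 := Real.cosh_sq_sub_sinh_sq s
  rw [hcosh, hsinh] at hkey
  have h4 : (m:ℝ) * (S m ^ 2) = (m:ℝ) * (D m * ((m:ℝ) * D m + 2)) := by nlinarith [hs2]
  exact mul_left_cancel₀ (ne_of_gt hm') h4

/-! ### The matrix exponential of the star graph -/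

lemma sq_eq (m : ℕ) : starAdj (m+1) * starAdj (m+1) =
    Matrix.of fun p q => if p.1 = 0 ∧ q.1 = 0 then (m:ℝ)
      else if p.1 ≠ 0 ∧ q.1 ≠ 0 then 1 else 0 := by
  ext p q
  rw [Matrix.mul_apply]
  simp only [starAdj, Matrix.of_apply]
  rw [Fin.sum_univ_succ]
  by_cases hp : p.1 = 0 <;> by_cases hq : q.1 = 0 <;>
    simp [hp, hq, Fin.val_succ, Finset.sum_const, Fin.val_zero]

lemma cube (m : ℕ) : starAdj (m+1) * (starAdj (m+1) * starAdj (m+1)) =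
    (m:ℝ) • starAdj (m+1) := by
  rw [sq_eq]
  ext p q
  rw [Matrix.mul_apply]
  simp only [starAdj, Matrix.of_apply, Matrix.smul_apply, smul_eq_mul]
  rw [Fin.sum_univ_succ]
  by_cases hp : p.1 = 0 <;> by_cases hq : q.1 = 0 <;>
    simp [hp, hq, Fin.val_succ, Finset.sum_const, Fin.val_zero]

lemma pow_odd (m k : ℕ) :
    starAdj (m+1) ^ (2*k+1) = ((m:ℝ)^k) • starAdj (m+1) := by
  induction k with
  | zero => simp
  | succ k ih =>
    have : 2*(k+1)+1 = (2*k+1) + 2 := by ring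
    rw [this, pow_add, ih, pow_two, smul_mul_assoc, cube, smul_smul, ← pow_succ]

lemma pow_even (m k : ℕ) :
    starAdj (m+1) ^ (2*k+2) = ((m:ℝ)^k) • (starAdj (m+1) * starAdj (m+1)) := by
  have : 2*k+2 = (2*k+1) + 1 := by ring
  rw [this, pow_succ, pow_odd, smul_mul_assoc]

set_option maxHeartbeats 1000000 in
lemma exp_eq (m : ℕ) : NormedSpace.exp (starAdj (m+1)) =
    1 + D m • (starAdj (m+1) * starAdj (m+1)) + S m • starAdj (m+1) := by
  rw [NormedSpace.exp_eq_tsum (𝕂 := ℝ)]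
  refine HasSum.tsum_eq ?_
  set A := starAdj (m+1) with hA
  have ho : HasSum (fun k : ℕ => (((2*k+1))!⁻¹ : ℝ) • A^(2*k+1)) (S m • A) := by
    have := (hasSum_S m).smul_const A
    convert this using 2 with k
    rw [pow_odd, smul_smul]
    congr 1
    field_simp
  have he1 : HasSum (fun k : ℕ => (((2*(k+1)))!⁻¹ : ℝ) • A^(2*(k+1))) (D m • (A * A)) := by
    have := (hasSum_D m).smul_const (A * A)
    convert this using 2 with k
    have h2 : 2*(k+1) = 2*k+2 := by ring
    rw [h2, pow_even, smul_smul]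
    congr 1
    field_simp
  have he : HasSum (fun k : ℕ => (((2*k))!⁻¹ : ℝ) • A^(2*k)) (1 + D m • (A * A)) := by
    have h := (hasSum_nat_add_iff
      (f := fun k : ℕ => (((2*k))!⁻¹ : ℝ) • A^(2*k)) 1).mp he1
    simpa [add_comm] using h
  have := HasSum.even_add_odd (f := fun k : ℕ => ((k)!⁻¹ : ℝ) • A^k) he ho
  convert this using 1

lemma exp_apply (m : ℕ) (p q : Fin (m+1)) :
    NormedSpace.exp (starAdj (m+1)) p q =
      (if p = q then 1 else 0)
      + D m * (if p.1 = 0 ∧ q.1 = 0 then (m:ℝ) else if p.1 ≠ 0 ∧ q.1 ≠ 0 then 1 else 0)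
      + S m * (if (p.1 = 0 ∧ q.1 ≠ 0) ∨ (q.1 = 0 ∧ p.1 ≠ 0) then 1 else 0) := by
  rw [exp_eq, sq_eq]
  simp [Matrix.add_apply, Matrix.smul_apply, Matrix.one_apply, starAdj, smul_eq_mul]

lemma e00 (n : ℕ) (h : 0 < n+3) :
    NormedSpace.exp (starAdj (n+3)) ⟨0,h⟩ ⟨0,h⟩ = 1 + ((n:ℝ)+2) * D (n+2) := by
  refine Eq.trans (exp_apply (n+2) ⟨0, by omega⟩ ⟨0, by omega⟩) ?_
  norm_num
  ring

lemma e01 (n : ℕ) (h : 0 < n+3) (h' : 1 < n+3) :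
    NormedSpace.exp (starAdj (n+3)) ⟨0,h⟩ ⟨1,h'⟩ = S (n+2) := by
  refine Eq.trans (exp_apply (n+2) ⟨0, by omega⟩ ⟨1, by omega⟩) ?_
  norm_num

lemma e11 (n : ℕ) (h : 1 < n+3) :
    NormedSpace.exp (starAdj (n+3)) ⟨1,h⟩ ⟨1,h⟩ = 1 + D (n+2) := by
  refine Eq.trans (exp_apply (n+2) ⟨1, by omega⟩ ⟨1, by omega⟩) ?_
  norm_num

lemma e22 (n : ℕ) (h : 2 < n+3) :
    NormedSpace.exp (starAdj (n+3)) ⟨2,h⟩ ⟨2,h⟩ = 1 + D (n+2) := by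
  refine Eq.trans (exp_apply (n+2) ⟨2, by omega⟩ ⟨2, by omega⟩) ?_
  norm_num

lemma e12 (n : ℕ) (h : 1 < n+3) (h' : 2 < n+3) :
    NormedSpace.exp (starAdj (n+3)) ⟨1,h⟩ ⟨2,h'⟩ = D (n+2) := by
  refine Eq.trans (exp_apply (n+2) ⟨1, by omega⟩ ⟨2, by omega⟩) ?_
  norm_num [Fin.ext_iff]

/-! ### The limits -/

lemma tendsto_ratio (a b : ℝ) :
    Tendsto (fun x : ℝ => (x + a) / (x + b)) atTop (𝓝 1) := by
  have h0 : Tendsto (fun x : ℝ => (x + b)⁻¹) atTop (𝓝 0) :=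
    tendsto_inv_atTop_zero.comp (tendsto_atTop_add_const_right _ b tendsto_id)
  have h1 : Tendsto (fun x : ℝ => 1 + (a - b) * (x + b)⁻¹) atTop (𝓝 1) := by
    have h2 := (h0.const_mul (a - b)).const_add (1 : ℝ)
    simpa using h2
  refine h1.congr' ?_
  filter_upwards [eventually_gt_atTop (-b)] with x hx
  have hxb : x + b ≠ 0 := by linarith
  field_simp
  ring

lemma tendsto_D_atTop : Tendsto (fun n : ℕ => D (n+2)) atTop atTop := by
  apply tendsto_atTop_mono (fun n => D_ge (n+2))
  apply Tendsto.atTop_div_const (by norm_num : (0:ℝ) < 24)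
  have : Tendsto (fun n : ℕ => ((n:ℝ))) atTop atTop := tendsto_natCast_atTop_atTop
  exact tendsto_atTop_mono (fun n => by push_cast; linarith) this

lemma tendsto_mD_atTop : Tendsto (fun n : ℕ => ((n:ℝ)+2) * D (n+2)) atTop atTop := by
  have h1 : Tendsto (fun n : ℕ => ((n:ℝ)+2)) atTop atTop :=
    tendsto_atTop_add_const_right _ 2 tendsto_natCast_atTop_atTop
  exact Tendsto.atTop_mul_atTop₀ h1 tendsto_D_atTop

lemma lim2 : Tendsto (fun n : ℕ => D (n+2) / (1 + D (n+2))) atTop (𝓝 1) := by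
  refine ((tendsto_ratio 0 1).comp tendsto_D_atTop).congr (fun n => ?_)
  simp only [Function.comp]
  ring

lemma lim1 : Tendsto (fun n : ℕ =>
    S (n+2) / Real.sqrt ((1 + ((n:ℝ)+2) * D (n+2)) * (1 + D (n+2)))) atTop (𝓝 1) := by
  set x : ℕ → ℝ := fun n => D (n+2) with hx
  set y : ℕ → ℝ := fun n => ((n:ℝ)+2) * D (n+2) with hy
  have hr : Tendsto (fun n : ℕ => (x n / (1 + x n)) * ((y n + 2) / (1 + y n)))
      atTop (𝓝 1) := by
    have h1 : Tendsto (fun n : ℕ => x n / (1 + x n)) atTop (𝓝 1) := lim2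
    have h2 : Tendsto (fun n : ℕ => (y n + 2) / (1 + y n)) atTop (𝓝 1) := by
      refine ((tendsto_ratio 2 1).comp tendsto_mD_atTop).congr (fun n => ?_)
      simp only [Function.comp]
      rw [add_comm (((n:ℝ)+2) * D (n+2)) 1]
    simpa using h1.mul h2
  have heq : ∀ n : ℕ, S (n+2) / Real.sqrt ((1 + ((n:ℝ)+2) * D (n+2)) * (1 + D (n+2)))
      = Real.sqrt ((x n / (1 + x n)) * ((y n + 2) / (1 + y n))) := by
    intro n
    have hxp : 0 < x n := D_pos (n+2)
    have hyp : 0 < y n := by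
      have : (0:ℝ) < (n:ℝ)+2 := by positivity
      exact mul_pos this hxp
    have hkey : S (n+2) ^ 2 = x n * (y n + 2) := by
      have := key_identities (n+2) (by omega)
      push_cast at this ⊢
      rw [this]
    have hne1 : (1:ℝ) + x n ≠ 0 := by positivity
    have hne2 : (1:ℝ) + y n ≠ 0 := by positivity
    have h1 : (x n / (1 + x n)) * ((y n + 2) / (1 + y n))
        = S (n+2)^2 / ((1 + ((n:ℝ)+2) * D (n+2)) * (1 + x n)) := by
      rw [hkey]
      field_simp
      simp only [hy] at hne2 ⊢
      field_simp
    rw [h1, Real.sqrt_div (sq_nonneg _), Real.sqrt_sq (S_nonneg _)]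
  have hs := (Real.continuous_sqrt.continuousAt (x := (1:ℝ))).tendsto.comp hr
  simp only [Function.comp, Real.sqrt_one] at hs
  exact Tendsto.congr (fun n => (heq n).symm) hs

end StarAux

open StarAux in
/-- In the star graph `K_{1,n−1}` the cosine of the communicability angle
between any two distinct vertices tends to `1` as `n → ∞` (by symmetry, it only depends on
whether the pair contains the hub): both for a hub–leaf pair and for a pair of distinct
leaves. Hence the communicability angle attains its lower bound `0°` in the limit. -/
theorem star_graph_cos_angle_limit :
    Tendsto (fun n : ℕ =>
        starCos (n + 3) ⟨0, by omega⟩ ⟨1, by omega⟩) atTop (𝓝 1) ∧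
    Tendsto (fun n : ℕ =>
        starCos (n + 3) ⟨1, by omega⟩ ⟨2, by omega⟩) atTop (𝓝 1) := by
  constructor
  · have key : ∀ n : ℕ, starCos (n+3) (⟨0, by omega⟩ : Fin (n+3)) ⟨1, by omega⟩
        = S (n+2) / Real.sqrt ((1 + ((n:ℝ)+2) * D (n+2)) * (1 + D (n+2))) := by
      intro n
      rw [starCos, e01, e00, e11]
    exact Tendsto.congr (fun n => (key n).symm) lim1
  · have key : ∀ n : ℕ, starCos (n+3) (⟨1, by omega⟩ : Fin (n+3)) ⟨2, by omega⟩
        = D (n+2) / (1 + D (n+2)) := by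
      intro n
      rw [starCos, e12, e11, e22]
      rw [Real.sqrt_mul_self (by have := D_pos (n+2); linarith)]
    exact Tendsto.congr (fun n => (key n).symm) lim2
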